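/- Let G be a finite abelian group. Then exp(G)·k*(G) ≥ d*(G), and equality holds if and only if G is a p-group of the form C_n^r for some n, r ∈ ℕ (or G is trivial). -/

import Mathlib

section Aux

lemma card_torsion_zmod (m c : ℕ) (hm : m ≠ 0) :
    Nat.card {x : ZMod m // c • x = 0} = Nat.gcd c m := by
  haveI : NeZero m := ⟨hm⟩
  set f : ZMod m →+ ZMod m := AddMonoidHom.mulLeft (c : ZMod m) with hf
  have hker : ∀ x : ZMod m, c • x = 0 ↔ x ∈ f.ker := by
    intro x
    rw [AddMonoidHom.mem_ker, hf, AddMonoidHom.coe_mulLeft, ← nsmul_eq_mul]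
  have e1 : {x : ZMod m // c • x = 0} ≃ f.ker := Equiv.subtypeEquiv (Equiv.refl _) (by simpa using hker)
  have hrange : f.range = AddSubgroup.zmultiples (c : ZMod m) := by
    ext y
    constructor
    · rintro ⟨x, rfl⟩
      exact ⟨x.val, by simp [hf, zsmul_eq_mul, mul_comm, ZMod.intCast_cast, ZMod.intCast_zmod_cast]⟩
    · rintro ⟨k, rfl⟩
      exact ⟨(k : ZMod m), by simp [hf, zsmul_eq_mul, mul_comm]⟩
  have hcr : Nat.card f.range = m / m.gcd c := by
    rw [hrange, Nat.card_zmultiples, ZMod.addOrderOf_coe c hm]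
  have hquot : Nat.card (ZMod m ⧸ f.ker) = m / m.gcd c := by
    rw [Nat.card_congr (QuotientAddGroup.quotientKerEquivRange f).toEquiv, hcr]
  have htot := AddSubgroup.card_eq_card_quotient_mul_card_addSubgroup f.ker
  rw [hquot, Nat.card_zmod] at htot
  have hg : m.gcd c ∣ m := Nat.gcd_dvd_left m c
  have hgpos : 0 < m.gcd c := Nat.gcd_pos_of_pos_left c (Nat.pos_of_ne_zero hm)
  have hqpos : 0 < m / m.gcd c := Nat.div_pos (Nat.le_of_dvd (Nat.pos_of_ne_zero hm) hg) hgpos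
  have h2 : m / m.gcd c * Nat.card f.ker = m / m.gcd c * m.gcd c := by
    rw [← htot, Nat.div_mul_cancel hg]
  rw [Nat.card_congr e1, Nat.eq_of_mul_eq_mul_left hqpos h2, Nat.gcd_comm]

lemma card_torsion_pi {r : ℕ} (m : Fin r → ℕ) (c : ℕ) :
    Nat.card {x : (∀ i, ZMod (m i)) // c • x = 0} = ∏ i, Nat.card {y : ZMod (m i) // c • y = 0} := by
  have e1 : {x : (∀ i, ZMod (m i)) // c • x = 0} ≃ {x : (∀ i, ZMod (m i)) // ∀ i, c • x i = 0} := by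
    apply Equiv.subtypeEquiv (Equiv.refl _)
    intro x
    simp only [Equiv.refl_apply, funext_iff]
    constructor
    · intro h i; simpa using h i
    · intro h i; simpa using h i
  have e2 : {x : (∀ i, ZMod (m i)) // ∀ i, c • x i = 0} ≃ ∀ i, {y : ZMod (m i) // c • y = 0} :=
    Equiv.subtypePiEquivPi (p := fun i (y : ZMod (m i)) => c • y = 0)
  rw [Nat.card_congr (e1.trans e2), Nat.card_pi]

lemma card_torsion_congr {G H : Type*} [AddCommGroup G] [AddCommGroup H] (e : G ≃+ H) (c : ℕ) :
    Nat.card {x : G // c • x = 0} = Nat.card {y : H // c • y = 0} := by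
  apply Nat.card_congr
  apply Equiv.subtypeEquiv e.toEquiv
  intro x
  have : c • (e.toEquiv x) = e (c • x) := by
    simp [map_nsmul]
  rw [this]
  exact ⟨fun h => by rw [h, map_zero], fun h => (AddEquiv.map_eq_zero_iff e).mp h⟩

lemma gcd_pp (p t m : ℕ) (hp : p.Prime) (hm : m ≠ 0) :
    Nat.gcd (p ^ t) m = p ^ (min t (m.factorization p)) := by
  obtain ⟨a, hat, ha⟩ := (Nat.dvd_prime_pow hp).mp (Nat.gcd_dvd_left (p ^ t) m)
  rw [ha]
  congr 1
  have h1 : p ^ a ∣ m := ha ▸ Nat.gcd_dvd_right (p ^ t) m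
  have h2 : a ≤ m.factorization p := (hp.pow_dvd_iff_le_factorization hm).mp h1
  have h3 : p ^ (min t (m.factorization p)) ∣ Nat.gcd (p ^ t) m := by
    apply Nat.dvd_gcd
    · exact pow_dvd_pow p (min_le_left _ _)
    · exact dvd_trans (pow_dvd_pow p (min_le_right _ _)) (Nat.ordProj_dvd m p)
  rw [ha] at h3
  have h4 := (Nat.pow_dvd_pow_iff_le_right hp.one_lt).mp h3
  omega

lemma min_succ_eq (p t m : ℕ) (hp : p.Prime) (hm : m ≠ 0) :
    min (t + 1) (m.factorization p) = min t (m.factorization p) + (if p ^ (t+1) ∣ m then 1 else 0) := by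
  have H := hp.pow_dvd_iff_le_factorization (k := t+1) hm
  by_cases h : p ^ (t+1) ∣ m
  · rw [if_pos h]; have := H.mp h; omega
  · rw [if_neg h]; have : ¬ (t+1 ≤ m.factorization p) := fun hle => h (H.mpr hle); omega

lemma count_from_S {r : ℕ} (n : Fin r → ℕ) (p t : ℕ) (hp : p.Prime) (hn : ∀ i, n i ≠ 0) :
    (∑ i, min (t+1) ((n i).factorization p)) =
      (∑ i, min t ((n i).factorization p)) + (Finset.univ.filter (fun i => p ^ (t+1) ∣ n i)).card := by
  rw [Finset.card_filter, ← Finset.sum_add_distrib]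
  exact Finset.sum_congr rfl fun i _ => min_succ_eq p t (n i) hp (hn i)

lemma multiset_eq {r s : ℕ} (n : Fin r → ℕ) (q : Fin s → ℕ)
    (h1 : ∀ i, 1 < n i) (hq : ∀ j, ∃ p k : ℕ, p.Prime ∧ 0 < k ∧ q j = p ^ k)
    (hcnt : ∀ c, ∏ i, Nat.gcd c (n i) = ∏ j, Nat.gcd c (q j)) :
    (Finset.univ.val.map q) =
      (Finset.univ.val.map n).bind
        (fun m => m.primeFactors.val.map (fun p => p ^ m.factorization p)) := by
  classical
  have hn0 : ∀ i, n i ≠ 0 := fun i => by have := h1 i; omega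
  have hq0 : ∀ j, q j ≠ 0 := fun j => by
    obtain ⟨p, k, hp, hk, hjk⟩ := hq j
    exact hjk ▸ pow_ne_zero k hp.pos.ne'
  have hS : ∀ (p : ℕ), p.Prime → ∀ t,
      (∑ i, min t ((n i).factorization p)) = (∑ j, min t ((q j).factorization p)) := by
    intro p hp t
    have := hcnt (p ^ t)
    rw [Finset.prod_congr rfl (fun i _ => gcd_pp p t (n i) hp (hn0 i)),
        Finset.prod_congr rfl (fun j _ => gcd_pp p t (q j) hp (hq0 j)),
        Finset.prod_pow_eq_pow_sum, Finset.prod_pow_eq_pow_sum] at this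
    exact Nat.pow_right_injective hp.two_le this
  have hD : ∀ (p : ℕ), p.Prime → ∀ t,
      (Finset.univ.filter (fun i => p ^ (t+1) ∣ n i)).card
        = (Finset.univ.filter (fun j => p ^ (t+1) ∣ q j)).card := by
    intro p hp t
    have h1' := count_from_S n p t hp hn0
    have h2' := count_from_S q p t hp hq0
    have h3' := hS p hp t
    have h4' := hS p hp (t+1)
    omega
  rw [Multiset.ext]
  intro x
  rw [Multiset.count_map, Multiset.count_bind]
  by_cases hx : ∃ p k : ℕ, p.Prime ∧ 0 < k ∧ x = p ^ k
  · obtain ⟨p, k, hp, hk, rfl⟩ := hx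
    have hqiff : ∀ j, (q j = p ^ k) ↔ (p ^ k ∣ q j ∧ ¬ p ^ (k+1) ∣ q j) := by
      intro j
      obtain ⟨P, a, hP, ha, hja⟩ := hq j
      rw [hja]
      constructor
      · intro h
        rw [h]
        exact ⟨dvd_rfl, fun hd => by
          have := (Nat.pow_dvd_pow_iff_le_right hp.one_lt).mp hd; omega⟩
      · rintro ⟨hd1, hd2⟩
        have hpP : p = P := by
          have : p ∣ P ^ a := dvd_trans (dvd_pow_self p hk.ne') hd1
          exact (Nat.prime_dvd_prime_iff_eq hp hP).mp (hp.dvd_of_dvd_pow this)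
        subst hpP
        have hle : k ≤ a := (Nat.pow_dvd_pow_iff_le_right hp.one_lt).mp hd1
        have hlt : ¬ (k + 1 ≤ a) := fun h => hd2 ((Nat.pow_dvd_pow_iff_le_right hp.one_lt).mpr h)
        congr 1; omega
    have hniff : ∀ (m : ℕ), 1 < m →
        (Multiset.card (Multiset.filter (fun p' => p ^ k = p' ^ m.factorization p')
          m.primeFactors.val))
        + (if p ^ (k+1) ∣ m then 1 else 0) = (if p ^ k ∣ m then 1 else 0) := by
      intro m hm
      have hm0 : m ≠ 0 := by omega
      have : (Multiset.filter (fun p' => p ^ k = p' ^ m.factorization p') m.primeFactors.val)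
          = (m.primeFactors.filter (fun p' => p ^ k = p' ^ m.factorization p')).val := by
        rw [Finset.filter_val]
      rw [this]
      have hfil : (m.primeFactors.filter (fun p' => p ^ k = p' ^ m.factorization p'))
          = if (p ^ k ∣ m ∧ ¬ p ^ (k+1) ∣ m) then {p} else ∅ := by
        ext p'
        simp only [Finset.mem_filter, Nat.mem_primeFactors]
        constructor
        · rintro ⟨⟨hp', hdvd, -⟩, heq⟩
          have hv : 0 < m.factorization p' := hp'.factorization_pos_of_dvd hm0 hdvd
          have hpp' : p' = p := by
            have : p' ∣ p ^ k := heq ▸ dvd_pow_self p' hv.ne'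
            exact (Nat.prime_dvd_prime_iff_eq hp' hp).mp (hp'.dvd_of_dvd_pow this)
          subst hpp'
          have hvk : m.factorization p' = k := by
            have := Nat.pow_right_injective hp.two_le heq.symm
            omega
          have hc1 : p' ^ k ∣ m := hvk ▸ Nat.ordProj_dvd m p'
          have hc2 : ¬ p' ^ (k+1) ∣ m := by
            intro hd
            have := (hp'.pow_dvd_iff_le_factorization hm0).mp hd
            omega
          rw [if_pos ⟨hc1, hc2⟩]
          exact Finset.mem_singleton_self p'
        · intro hmem
          by_cases hcond : p ^ k ∣ m ∧ ¬ p ^ (k+1) ∣ m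
          · rw [if_pos hcond] at hmem
            obtain ⟨hc1, hc2⟩ := hcond
            rw [Finset.mem_singleton] at hmem
            subst hmem
            have hge : k ≤ m.factorization p' := (hp.pow_dvd_iff_le_factorization hm0).mp hc1
            have hlt : ¬ (k + 1 ≤ m.factorization p') :=
              fun h => hc2 ((hp.pow_dvd_iff_le_factorization hm0).mpr h)
            have hvk : m.factorization p' = k := by omega
            refine ⟨⟨hp, ?_, hm0⟩, by rw [hvk]⟩
            exact dvd_trans (dvd_pow_self p' hk.ne') (hvk ▸ Nat.ordProj_dvd m p')
          · rw [if_neg hcond] at hmem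
            exact absurd hmem (Finset.notMem_empty p')
      rw [hfil]
      by_cases hcond : p ^ k ∣ m ∧ ¬ p ^ (k+1) ∣ m
      · rw [if_pos hcond, if_pos hcond.1, if_neg hcond.2]
        simp
      · rw [if_neg hcond]
        by_cases h' : p ^ (k+1) ∣ m
        · have h'' : p ^ k ∣ m := dvd_trans (pow_dvd_pow p (by omega)) h'
          rw [if_pos h'', if_pos h']
          simp
        · have h'' : ¬ p ^ k ∣ m := fun h'' => hcond ⟨h'', h'⟩
          rw [if_neg h'', if_neg h']
          simp
    rw [Multiset.map_map]
    have hLHS : Multiset.card (Multiset.filter (fun a => p ^ k = q a) Finset.univ.val)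
        = (Finset.univ.filter (fun a => p ^ k = q a)).card := by
      rw [Finset.card_def, Finset.filter_val]
    have hq_pt : ∀ j, (if p ^ k = q j then 1 else 0) + (if p ^ (k+1) ∣ q j then 1 else 0)
        = (if p ^ k ∣ q j then (1:ℕ) else 0) := by
      intro j
      by_cases h' : p ^ k = q j
      · rw [if_pos h']
        have := (hqiff j).mp h'.symm
        rw [if_neg this.2, if_pos this.1]
      · rw [if_neg h']
        by_cases h2 : p ^ (k+1) ∣ q j
        · rw [if_pos h2, if_pos (dvd_trans (pow_dvd_pow p (by omega)) h2)]
        · rw [if_neg h2]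
          by_cases h3 : p ^ k ∣ q j
          · exact absurd ((hqiff j).mpr ⟨h3, h2⟩).symm h'
          · rw [if_neg h3]
    have hq_sum : (Finset.univ.filter (fun a => p ^ k = q a)).card
        + (Finset.univ.filter (fun j => p ^ (k+1) ∣ q j)).card
        = (Finset.univ.filter (fun j => p ^ k ∣ q j)).card := by
      rw [Finset.card_filter, Finset.card_filter, Finset.card_filter, ← Finset.sum_add_distrib]
      exact Finset.sum_congr rfl fun j _ => hq_pt j
    have hRHS : (Multiset.map
        ((fun b => Multiset.count (p ^ k)
          (Multiset.map (fun p' => p' ^ b.factorization p') b.primeFactors.val)) ∘ n)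
        Finset.univ.val).sum
        = ∑ i, Multiset.count (p ^ k)
            (Multiset.map (fun p' => p' ^ (n i).factorization p') (n i).primeFactors.val) := rfl
    have hn_sum : (∑ i, Multiset.count (p ^ k)
            (Multiset.map (fun p' => p' ^ (n i).factorization p') (n i).primeFactors.val))
        + (Finset.univ.filter (fun i => p ^ (k+1) ∣ n i)).card
        = (Finset.univ.filter (fun i => p ^ k ∣ n i)).card := by
      rw [Finset.card_filter, Finset.card_filter, ← Finset.sum_add_distrib]
      refine Finset.sum_congr rfl fun i _ => ?_
      rw [Multiset.count_map]
      exact hniff (n i) (h1 i)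
    have hDk : (Finset.univ.filter (fun i => p ^ k ∣ n i)).card
        = (Finset.univ.filter (fun j => p ^ k ∣ q j)).card := by
      have := hD p hp (k - 1)
      have hk1 : k - 1 + 1 = k := by omega
      rw [hk1] at this
      exact this
    have hDk1 := hD p hp k
    rw [hLHS, hRHS]
    omega
  · have hqside : Multiset.card (Multiset.filter (fun j => x = q j) Finset.univ.val) = 0 := by
      rw [Multiset.card_eq_zero, Multiset.filter_eq_nil]
      intro j _ hxj
      obtain ⟨p, k, hp, hk, hjk⟩ := hq j
      exact hx ⟨p, k, hp, hk, hxj ▸ hjk⟩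
    rw [hqside]
    symm
    rw [Multiset.sum_eq_zero]
    intro c hc
    rw [Multiset.mem_map] at hc
    obtain ⟨i, -, rfl⟩ := hc
    rw [Multiset.count_eq_zero]
    intro hmem
    rw [Multiset.mem_map] at hmem
    obtain ⟨p', hp'mem, hp'⟩ := hmem
    rw [Finset.mem_val, Nat.mem_primeFactors] at hp'mem
    obtain ⟨hpr, hdvd, hne⟩ := hp'mem
    exact hx ⟨p', _, hpr, hpr.factorization_pos_of_dvd hne hdvd, hp'.symm⟩

lemma pp_sum (m : ℕ) (hpp : IsPrimePow m) (c : ℚ) :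
    ∑ p ∈ m.primeFactors, c * (1 - 1/((p:ℚ)^(m.factorization p))) = c * (1 - 1/(m:ℚ)) := by
  obtain ⟨p, k, hp, hk, rfl⟩ := hpp
  have hp' : p.Prime := hp.nat_prime
  rw [Nat.primeFactors_prime_pow hk.ne' hp', Finset.sum_singleton, hp'.factorization_pow,
    Finsupp.single_eq_same]
  push_cast
  ring

lemma L1 : ∀ m : ℕ, 2 ≤ m →
    ((m:ℚ) - 1 ≤ ∑ p ∈ m.primeFactors, (m:ℚ) * (1 - 1/((p:ℚ)^(m.factorization p)))) ∧
    (IsPrimePow m ∨ (m:ℚ) ≤ ∑ p ∈ m.primeFactors, (m:ℚ) * (1 - 1/((p:ℚ)^(m.factorization p)))) := by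
  intro m
  induction m using Nat.strong_induction_on with
  | _ m ih =>
    intro hm
    have hm0 : m ≠ 0 := by omega
    set p := m.minFac with hpdef
    have hp : p.Prime := Nat.minFac_prime (by omega)
    set k := m.factorization p with hkdef
    have hk : 0 < k := hp.factorization_pos_of_dvd hm0 (Nat.minFac_dvd m)
    set Q := p ^ k with hQdef
    set m' := m / Q with hm'def
    have hQm' : Q * m' = m := Nat.ordProj_mul_ordCompl_eq_self m p
    have hQ2 : 2 ≤ Q := by
      calc 2 ≤ p := hp.two_le
      _ ≤ p ^ k := Nat.le_self_pow hk.ne' p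
    have hm'0 : m' ≠ 0 := by
      intro h; rw [h, mul_zero] at hQm'; omega
    have hpfm' : m'.primeFactors = m.primeFactors.erase p := by
      rw [← Nat.support_factorization, hm'def, hQdef, hkdef, Nat.factorization_ordCompl m p,
        Finsupp.support_erase, Nat.support_factorization]
    have hfac' : ∀ p' ∈ m'.primeFactors, m'.factorization p' = m.factorization p' := by
      intro p' hp'
      rw [hpfm'] at hp'
      have hne : p' ≠ p := Finset.ne_of_mem_erase hp'
      rw [hm'def, hQdef, hkdef, Nat.factorization_ordCompl m p, Finsupp.erase_ne hne]
    have hpmem : p ∈ m.primeFactors := Nat.mem_primeFactors.mpr ⟨hp, Nat.minFac_dvd m, hm0⟩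
    have hsplit : ∑ p' ∈ m.primeFactors, (m:ℚ) * (1 - 1/((p':ℚ)^(m.factorization p')))
        = (m:ℚ) * (1 - 1/((p:ℚ)^k))
          + ∑ p' ∈ m'.primeFactors, (m:ℚ) * (1 - 1/((p':ℚ)^(m'.factorization p'))) := by
      rw [hpfm', ← Finset.sum_erase_add m.primeFactors _ hpmem, add_comm]
      congr 1
      apply Finset.sum_congr rfl
      intro p' hp'
      congr 2
      rw [hfac' p' (hpfm' ▸ hp')]
    have hQQ : ((p:ℚ))^k = (Q:ℚ) := by rw [hQdef]; push_cast; ring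
    have hQ0 : (Q:ℚ) > 0 := by positivity
    have hmQ : (m:ℚ) = (Q:ℚ) * (m':ℚ) := by exact_mod_cast hQm'.symm
    by_cases hm'1 : m' = 1
    · have hpf' : m'.primeFactors = ∅ := by rw [hm'1]; simp
      have hmQ' : m = Q := by rw [← hQm', hm'1, mul_one]
      rw [hsplit, hpf', Finset.sum_empty, add_zero, hQQ, ← hmQ']
      constructor
      · have : (m:ℚ) ≠ 0 := by positivity
        field_simp; exact le_rfl
      · left
        exact ⟨p, k, hp.prime, hk, hmQ'.symm ▸ rfl⟩
    · have hm'2 : 2 ≤ m' := (Nat.two_le_iff m').mpr ⟨hm'0, hm'1⟩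
      have hm'lt : m' < m := by
        rw [hm'def]
        exact Nat.div_lt_self (by omega) (by omega)
      obtain ⟨ih1, -⟩ := ih m' hm'lt hm'2
      have hterm : ∀ p' ∈ m'.primeFactors,
          (m:ℚ) * (1 - 1/((p':ℚ)^(m'.factorization p')))
          = (Q:ℚ) * ((m':ℚ) * (1 - 1/((p':ℚ)^(m'.factorization p')))) := by
        intro p' _
        rw [hmQ]; ring
      have hsum2 : ∑ p' ∈ m'.primeFactors, (m:ℚ) * (1 - 1/((p':ℚ)^(m'.factorization p')))
          = (Q:ℚ) * ∑ p' ∈ m'.primeFactors, (m':ℚ) * (1 - 1/((p':ℚ)^(m'.factorization p'))) := by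
        rw [Finset.mul_sum]
        exact Finset.sum_congr rfl hterm
      have hge : (m:ℚ) ≤ ∑ p' ∈ m.primeFactors, (m:ℚ) * (1 - 1/((p':ℚ)^(m.factorization p'))) := by
        rw [hsplit, hsum2, hQQ]
        have h1 : (Q:ℚ) * ((m':ℚ) - 1) ≤ (Q:ℚ) * ∑ p' ∈ m'.primeFactors, (m':ℚ) * (1 - 1/((p':ℚ)^(m'.factorization p'))) := by
          apply mul_le_mul_of_nonneg_left ih1 (by positivity)
        have h2 : (m:ℚ) * (1 - 1/(Q:ℚ)) = (m:ℚ) - (m':ℚ) := by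
          rw [hmQ]; field_simp
        have hQ2' : (2:ℚ) ≤ (Q:ℚ) := by exact_mod_cast hQ2
        have hm'2' : (2:ℚ) ≤ (m':ℚ) := by exact_mod_cast hm'2
        nlinarith [h1, h2]
      exact ⟨by linarith, Or.inr hge⟩

lemma term_nonneg (m p : ℕ) (hp : p ∈ m.primeFactors) :
    (0:ℚ) ≤ 1 - 1/((p:ℚ)^(m.factorization p)) := by
  have h2 : 2 ≤ p := (Nat.prime_of_mem_primeFactors hp).two_le
  have h1 : (1:ℚ) ≤ (p:ℚ)^(m.factorization p) := by
    apply one_le_pow₀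
    exact_mod_cast by omega
  have h0 : (0:ℚ) < (p:ℚ)^(m.factorization p) := by positivity
  have : 1/((p:ℚ)^(m.factorization p)) ≤ 1 := by
    rw [div_le_one h0]; exact h1
  linarith

lemma SE_ge_Sm (m E : ℕ) (hmE : m ≤ E) :
    ∑ p ∈ m.primeFactors, (m:ℚ) * (1 - 1/((p:ℚ)^(m.factorization p)))
    ≤ ∑ p ∈ m.primeFactors, (E:ℚ) * (1 - 1/((p:ℚ)^(m.factorization p))) := by
  apply Finset.sum_le_sum
  intro p hp
  apply mul_le_mul_of_nonneg_right _ (term_nonneg m p hp)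
  exact_mod_cast hmE

lemma L2a (m E : ℕ) (hm : 2 ≤ m) (hE : m ∣ E) (hE0 : 0 < E) :
    (m:ℚ) - 1 ≤ ∑ p ∈ m.primeFactors, (E:ℚ) * (1 - 1/((p:ℚ)^(m.factorization p))) :=
  le_trans (L1 m hm).1 (SE_ge_Sm m E (Nat.le_of_dvd hE0 hE))

lemma L2b (m E : ℕ) (hm : 2 ≤ m) (hE : m ∣ E) (hE0 : 0 < E)
    (heq : ∑ p ∈ m.primeFactors, (E:ℚ) * (1 - 1/((p:ℚ)^(m.factorization p))) = (m:ℚ) - 1) :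
    m = E ∧ IsPrimePow m := by
  have hmE := Nat.le_of_dvd hE0 hE
  have hSm := SE_ge_Sm m E hmE
  obtain ⟨hL1, hL2⟩ := L1 m hm
  have hpp : IsPrimePow m := by
    rcases hL2 with h | h
    · exact h
    · exfalso
      rw [heq] at hSm
      linarith
  refine ⟨?_, hpp⟩
  rw [pp_sum m hpp] at heq
  have hm1 : (1:ℚ) - 1/(m:ℚ) > 0 := by
    have : (2:ℚ) ≤ (m:ℚ) := by exact_mod_cast hm
    have h0 : (0:ℚ) < (m:ℚ) := by linarith
    rw [gt_iff_lt, sub_pos, div_lt_one h0]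
    linarith
  have hmne : (m:ℚ) ≠ 0 := by positivity
  have hmeq : (m:ℚ) * (1 - 1/(m:ℚ)) = (m:ℚ) - 1 := by field_simp
  have : ((E:ℚ) - (m:ℚ)) * (1 - 1/(m:ℚ)) = 0 := by rw [sub_mul, heq, hmeq]; ring
  have hEm : (E:ℚ) = (m:ℚ) := by
    rcases mul_eq_zero.mp this with h | h
    · linarith [sub_eq_zero.mp h]
    · linarith
  exact_mod_cast hEm.symm

lemma L2c (m : ℕ) (hm : 2 ≤ m) (hpp : IsPrimePow m) :
    ∑ p ∈ m.primeFactors, (m:ℚ) * (1 - 1/((p:ℚ)^(m.factorization p))) = (m:ℚ) - 1 := by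
  rw [pp_sum m hpp]
  have hmne : (m:ℚ) ≠ 0 := by positivity
  field_simp

end Aux

theorem stmt4 (G : Type*) [AddCommGroup G] [Fintype G]
    (r s : ℕ) (n : Fin r → ℕ) (q : Fin s → ℕ)
    (h1 : ∀ i, 1 < n i) (hchain : ∀ i j : Fin r, i ≤ j → n i ∣ n j)
    (hq : ∀ j, ∃ p k : ℕ, p.Prime ∧ 0 < k ∧ q j = p ^ k)
    (hGn : Nonempty (G ≃+ ((i : Fin r) → ZMod (n i))))
    (hGq : Nonempty (G ≃+ ((j : Fin s) → ZMod (q j)))) :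
    (∑ i, ((n i : ℚ) - 1)) ≤ (AddMonoid.exponent G : ℚ) * ∑ j, ((q j : ℚ) - 1) / (q j) ∧
    ((AddMonoid.exponent G : ℚ) * ∑ j, ((q j : ℚ) - 1) / (q j) = ∑ i, ((n i : ℚ) - 1) ↔
      ∃ p k : ℕ, p.Prime ∧ ∀ i, n i = p ^ k) := by
  classical
  obtain ⟨en⟩ := hGn
  obtain ⟨eq'⟩ := hGq
  have hn0 : ∀ i, n i ≠ 0 := fun i => by have := h1 i; omega
  have hq0 : ∀ j, q j ≠ 0 := fun j => by
    obtain ⟨p, k, hp, hk, hjk⟩ := hq j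
    exact hjk ▸ pow_ne_zero k hp.pos.ne'
  set E := AddMonoid.exponent G with hEdef
  have hElcm : E = Finset.univ.lcm n := by
    rw [hEdef, AddMonoid.exponent_eq_of_addEquiv en, AddMonoid.exponent_pi]
    congr 1
    funext i
    exact ZMod.exponent (n i)
  have hnE : ∀ i, n i ∣ E := fun i => hElcm ▸ Finset.dvd_lcm (Finset.mem_univ i)
  have hE0 : 0 < E := AddMonoid.ExponentExists.exponent_pos AddMonoid.ExponentExists.of_finite
  have hEi0 : ∀ _ : 0 < r, E = n ⟨r-1, by omega⟩ := by
    intro hr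
    apply Nat.dvd_antisymm
    · rw [hElcm]
      apply Finset.lcm_dvd
      intro i _
      apply hchain
      rw [Fin.le_def]
      simp only []
      omega
    · exact hnE _
  have hcnt : ∀ c, ∏ i, Nat.gcd c (n i) = ∏ j, Nat.gcd c (q j) := by
    intro c
    have hn' : ∏ i, Nat.gcd c (n i) = Nat.card {x : G // c • x = 0} := by
      rw [card_torsion_congr en c, card_torsion_pi]
      exact Finset.prod_congr rfl fun i _ => (card_torsion_zmod (n i) c (hn0 i)).symm
    have hq' : ∏ j, Nat.gcd c (q j) = Nat.card {x : G // c • x = 0} := by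
      rw [card_torsion_congr eq' c, card_torsion_pi]
      exact Finset.prod_congr rfl fun j _ => (card_torsion_zmod (q j) c (hq0 j)).symm
    rw [hn', hq']
  have hM := multiset_eq n q h1 hq hcnt
  have hMS : ∀ F : ℕ → ℚ, ∑ j, F (q j)
      = ∑ i, ∑ p ∈ (n i).primeFactors, F (p ^ (n i).factorization p) := by
    intro F
    have h2 : ∑ j, F (q j) = ((Finset.univ.val.map q).map F).sum := by
      rw [Multiset.map_map]; rfl
    rw [h2, hM, Multiset.map_bind, Multiset.sum_bind, Multiset.map_map]
    apply congrArg Multiset.sum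
    apply Multiset.map_congr rfl
    intro i _
    simp only [Function.comp_apply]
    rw [Multiset.map_map]
    rfl
  have hKM : (E:ℚ) * ∑ j, ((q j : ℚ) - 1) / (q j)
      = ∑ i, ∑ p ∈ (n i).primeFactors,
          (E:ℚ) * (1 - 1/((p:ℚ)^((n i).factorization p))) := by
    rw [Finset.mul_sum]
    have hterm : ∀ j, (E:ℚ) * (((q j : ℚ) - 1) / (q j))
        = (fun x : ℕ => (E:ℚ) * (1 - 1/(x:ℚ))) (q j) := by
      intro j
      have hqj : (q j : ℚ) ≠ 0 := Nat.cast_ne_zero.mpr (hq0 j)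
      field_simp
    rw [Finset.sum_congr rfl (fun j _ => hterm j), hMS (fun x : ℕ => (E:ℚ) * (1 - 1/(x:ℚ)))]
    refine Finset.sum_congr rfl fun i _ => Finset.sum_congr rfl fun p _ => ?_
    push_cast
    ring
  have hac : ∀ i ∈ Finset.univ, ((n i : ℚ) - 1)
      ≤ ∑ p ∈ (n i).primeFactors, (E:ℚ) * (1 - 1/((p:ℚ)^((n i).factorization p))) :=
    fun i _ => L2a (n i) E (h1 i) (hnE i) hE0
  constructor
  · rw [hKM]
    exact Finset.sum_le_sum hac
  · rw [hKM, eq_comm, Finset.sum_eq_sum_iff_of_le hac]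
    constructor
    · intro hall
      rcases Nat.eq_zero_or_pos r with hr | hr
      · exact ⟨2, 0, Nat.prime_two, fun i => absurd i.isLt (by omega)⟩
      · set i0 : Fin r := ⟨r-1, by omega⟩ with hi0
        have hE' := hEi0 hr
        obtain ⟨hni0E, hpp⟩ :=
          L2b (n i0) E (h1 i0) (hnE i0) hE0 (hall i0 (Finset.mem_univ i0)).symm
        obtain ⟨p, k, hp, hk, hpk⟩ := hpp
        refine ⟨p, k, hp.nat_prime, fun i => ?_⟩
        have hniE : n i = E :=
          (L2b (n i) E (h1 i) (hnE i) hE0 (hall i (Finset.mem_univ i)).symm).1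
        rw [hniE, ← hni0E]
        exact hpk.symm
    · rintro ⟨p, k, hp, hall⟩
      intro i _
      have hr : 0 < r := i.pos
      have hE' := hEi0 hr
      have hniE : n i = E := by rw [hE', hall i, hall ⟨r-1, by omega⟩]
      have hk0 : k ≠ 0 := by
        intro h
        have := h1 i
        rw [hall i, h, pow_zero] at this
        omega
      have hpp : IsPrimePow (n i) := ⟨p, k, hp.prime, Nat.pos_of_ne_zero hk0, (hall i).symm⟩
      rw [← hniE]
      exact (L2c (n i) (h1 i) hpp).symm
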